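/- Let β ∈ (0,1] and let F : [0,∞) → ℂ be continuous on [0,∞) and locally Hölder continuous of order β on (0,∞). Then for every α ∈ (0,β) and every t > 0, the integral ∫_0^t (F(t) − F(s)) (t − s)^{−1−α} ds converges absolutely, the function I^{1−α}F is differentiable at t, and its derivative equals D^α F(t) := (1/Γ(1−α)) ( t^{−α} F(t) + α ∫_0^t (F(t) − F(s)) (t − s)^{−1−α} ds ). -/

import Mathlib

open MeasureTheory Set Filter Real Topology intervalIntegral


lemma aux_int {r a c : ℝ} (hr : -1 < r) (hac : a ≤ c) :
    IntegrableOn (fun s : ℝ => (c - s) ^ r) (Set.Ioo a c) volume := by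
  have h := (intervalIntegrable_rpow' (a := c - a) (b := c - c) hr).comp_sub_left c
  simp only [sub_sub_cancel] at h
  rwa [intervalIntegrable_iff_integrableOn_Ioo_of_le hac] at h

lemma aux_val {r a b c : ℝ} (hr : -1 < r) (hab : a ≤ b) (hbc : b ≤ c) :
    ∫ s in Set.Ioo a b, (c - s) ^ r = ((c - a) ^ (r+1) - (c - b) ^ (r+1)) / (r+1) := by
  rw [← MeasureTheory.integral_Ioc_eq_integral_Ioo, ← intervalIntegral.integral_of_le hab]
  rw [intervalIntegral.integral_comp_sub_left (fun x : ℝ => x ^ r) c]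
  rw [integral_rpow (Or.inl hr)]

lemma aux_integrable2 {α a b c J : ℝ} {G : ℝ → ℂ} (hα0 : 0 < α) (hα1 : α < 1)
    (h0a : 0 ≤ a) (hbc : b ≤ c) (hGc : ContinuousOn G (Set.Ici 0))
    (hJ : ∀ s ∈ Set.Ioo a b, ‖G s‖ ≤ J) :
    IntegrableOn (fun s : ℝ => ((c - s) ^ (-α) : ℝ) • G s) (Set.Ioo a b) volume := by
  rcases le_or_gt b a with h | hab
  · rw [Set.Ioo_eq_empty (by intro h'; exact absurd h' (not_lt.2 h))]
    exact integrableOn_empty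
  have hac : a < c := lt_of_lt_of_le hab hbc
  apply Integrable.mono' (g := fun s : ℝ => J * (c - s) ^ (-α))
  · exact (((aux_int (by linarith) hac.le).mono_set
      (Set.Ioo_subset_Ioo le_rfl hbc)).const_mul J)
  · apply ContinuousOn.aestronglyMeasurable _ measurableSet_Ioo
    apply ContinuousOn.fun_smul
    · apply ContinuousOn.rpow_const (continuousOn_const.sub continuousOn_id)
      intro s hs
      have hsc : s < c := lt_of_lt_of_le hs.2 hbc
      exact Or.inl (by intro h; rw [Pi.sub_apply, sub_eq_zero] at h; exact absurd h.symm hsc.ne)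
    · exact hGc.mono (fun s hs => le_trans h0a hs.1.le)
  · rw [ae_restrict_iff' measurableSet_Ioo]
    filter_upwards with s hs
    rw [norm_smul, Real.norm_eq_abs,
      abs_of_nonneg (Real.rpow_nonneg (by have := hs.2; have : s < c := lt_of_lt_of_le this hbc; linarith) _)]
    rw [mul_comm J _]
    exact mul_le_mul_of_nonneg_left (hJ s hs) (Real.rpow_nonneg (by have := hs.2; have : s < c := lt_of_lt_of_le this hbc; linarith) _)

lemma aux_normbound {α a b c J : ℝ} {G : ℝ → ℂ} (hα0 : 0 < α) (hα1 : α < 1)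
    (h0a : 0 ≤ a) (hab : a ≤ b) (hbc : b ≤ c) (hJ0 : 0 ≤ J)
    (hGc : ContinuousOn G (Set.Ici 0))
    (hJ : ∀ s ∈ Set.Ioo a b, ‖G s‖ ≤ J) :
    ‖∫ s in Set.Ioo a b, ((c - s) ^ (-α) : ℝ) • G s‖ ≤ J * (c - a) ^ (1 - α) / (1 - α) := by
  have hbnd : ‖∫ s in Set.Ioo a b, ((c - s) ^ (-α) : ℝ) • G s‖
      ≤ ∫ s in Set.Ioo a b, J * (c - s) ^ (-α) := by
    apply MeasureTheory.norm_integral_le_of_norm_le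
    · exact ((aux_int (by linarith : (-1:ℝ) < -α) (hab.trans hbc)).mono_set
        (Set.Ioo_subset_Ioo le_rfl hbc)).const_mul J
    · rw [ae_restrict_iff' measurableSet_Ioo]
      filter_upwards with s hs
      have hsc : s < c := lt_of_lt_of_le hs.2 hbc
      rw [norm_smul, Real.norm_eq_abs, abs_of_nonneg (Real.rpow_nonneg (by linarith) _)]
      rw [mul_comm J _]
      exact mul_le_mul_of_nonneg_left (hJ s hs) (Real.rpow_nonneg (by linarith) _)
  have hval : ∫ s in Set.Ioo a b, J * (c - s) ^ (-α)
      = J * (((c - a) ^ (1 - α) - (c - b) ^ (1 - α)) / (1 - α)) := by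
    rw [MeasureTheory.integral_const_mul, aux_val (by linarith : (-1:ℝ) < -α) hab hbc]
    rw [show -α + 1 = 1 - α by ring]
  refine hbnd.trans ?_
  rw [hval]
  have h1 : (0:ℝ) ≤ (c - b) ^ (1 - α) := Real.rpow_nonneg (by linarith) _
  have h2 : (0:ℝ) < 1 - α := by linarith
  rw [mul_div_assoc]
  gcongr
  linarith


lemma aux_tend0 {β' C t : ℝ} (h : 0 < β') {f : ℝ → ℂ} {l : Filter ℝ} (hl : l ≤ 𝓝 t)
    (hb : ∀ᶠ u in l, ‖f u‖ ≤ C * |u - t| ^ β') : Tendsto f l (𝓝 0) := by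
  apply squeeze_zero_norm' hb
  have h1 : Tendsto (fun u : ℝ => |u - t|) l (𝓝 0) := by
    have := ((continuous_abs.comp (continuous_sub_right t)).tendsto t)
    simp only [Function.comp, sub_self, abs_zero] at this
    exact this.mono_left hl
  have h2 : ContinuousAt (fun x : ℝ => x ^ β') 0 :=
    Real.continuousAt_rpow_const 0 β' (Or.inr h.le)
  have h3 := (h2.tendsto.comp h1)
  rw [Real.zero_rpow h.ne'] at h3
  have := h3.const_mul C
  simpa using this

lemma key_ineq {α x y : ℝ} (hα : 0 < α) (hx : 0 < x) (hxy : x < y) :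
    |y ^ (-α) - x ^ (-α)| ≤ α * x ^ (-1-α) * (y - x) := by
  obtain ⟨ξ, hξ, hslope⟩ := exists_hasDerivAt_eq_slope (fun z : ℝ => z ^ (-α))
      (fun z : ℝ => -α * z ^ (-α - 1)) hxy
      (by
        apply ContinuousOn.rpow_const (continuousOn_id)
        intro z hz
        exact Or.inl (by rcases hz with ⟨h1, _⟩; exact (lt_of_lt_of_le hx h1).ne'))
      (by
        intro z hz
        simpa using Real.hasDerivAt_rpow_const (p := -α) (Or.inl (hx.trans hz.1).ne'))
  have hξx : x ≤ ξ := hξ.1.le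
  have hξ0 : 0 < ξ := hx.trans hξ.1
  have h1 : (y ^ (-α) - x ^ (-α)) / (y - x) = -α * ξ ^ (-α - 1) := hslope.symm
  have h2 : |y ^ (-α) - x ^ (-α)| = (α * ξ ^ (-α - 1)) * (y - x) := by
    have hyx : 0 < y - x := by linarith
    have : y ^ (-α) - x ^ (-α) = -α * ξ ^ (-α - 1) * (y - x) := by
      field_simp at h1 ⊢
      linarith [h1]
    rw [this, abs_mul, abs_mul]
    rw [abs_of_pos hyx, abs_of_nonneg (Real.rpow_nonneg hξ0.le _), abs_neg, abs_of_pos hα]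
  rw [h2]
  have : ξ ^ (-α - 1) ≤ x ^ (-α - 1) := by
    apply Real.rpow_le_rpow_of_nonpos hx hξx (by linarith)
  have h3 : (-1 - α) = (-α - 1) := by ring
  rw [h3]
  have hyx : 0 ≤ y - x := by linarith
  have := mul_le_mul_of_nonneg_left this hα.le
  exact mul_le_mul_of_nonneg_right this hyx

lemma aux_L {α β t K : ℝ} {G : ℝ → ℂ} (hα0 : 0 < α) (hαβ : α < β) (hβ1 : β ≤ 1)
    (ht : 0 < t) (hGc : ContinuousOn G (Set.Ici 0)) (hK0 : 0 ≤ K)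
    (hK : ∀ s ∈ Set.Icc 0 (t+1), ‖G s‖ ≤ K * |t - s| ^ β) :
    IntegrableOn (fun s : ℝ => ((t - s) ^ (-1-α) : ℝ) • G s) (Set.Ioo 0 t) volume := by
  have hα1 : α < 1 := lt_of_lt_of_le hαβ hβ1
  apply Integrable.mono' (g := fun s : ℝ => K * (t - s) ^ (β - 1 - α))
  · exact (aux_int (by linarith) ht.le).const_mul K
  · apply ContinuousOn.aestronglyMeasurable _ measurableSet_Ioo
    apply ContinuousOn.fun_smul
    · apply ContinuousOn.rpow_const (continuousOn_const.sub continuousOn_id)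
      intro s hs
      exact Or.inl (by have := hs.2; intro h; rw [Pi.sub_apply, sub_eq_zero] at h; exact absurd h.symm this.ne)
    · exact hGc.mono (fun s hs => hs.1.le)
  · rw [ae_restrict_iff' measurableSet_Ioo]
    filter_upwards with s hs
    have hts : 0 < t - s := by linarith [hs.2]
    rw [norm_smul, Real.norm_eq_abs, abs_of_nonneg (Real.rpow_nonneg hts.le _)]
    have h1 : ‖G s‖ ≤ K * (t - s) ^ β := by
      have := hK s ⟨hs.1.le, by linarith [hs.2]⟩
      rwa [abs_of_pos hts] at this
    calc (t - s) ^ (-1-α) * ‖G s‖ ≤ (t - s) ^ (-1-α) * (K * (t - s) ^ β) :=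
          mul_le_mul_of_nonneg_left h1 (Real.rpow_nonneg hts.le _)
      _ = K * (t - s) ^ (β - 1 - α) := by
          rw [mul_comm, mul_assoc, ← Real.rpow_add hts]
          ring_nf

lemma psi_deriv {α β t K : ℝ} {G : ℝ → ℂ} (hα0 : 0 < α) (hαβ : α < β) (hβ1 : β ≤ 1)
    (ht : 0 < t) (hGc : ContinuousOn G (Set.Ici 0)) (hK0 : 0 ≤ K)
    (hK : ∀ s ∈ Set.Icc 0 (t+1), ‖G s‖ ≤ K * |t - s| ^ β) :
    HasDerivAt (fun u => ∫ s in Set.Ioo 0 u, ((u - s) ^ (-α) : ℝ) • G s)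
      ((-α : ℝ) • ∫ s in Set.Ioo 0 t, ((t - s) ^ (-1-α) : ℝ) • G s) t := by
  have hα1 : α < 1 := lt_of_lt_of_le hαβ hβ1
  have hβ0 : 0 < β := hα0.trans hαβ
  set Ψ : ℝ → ℂ := fun u => ∫ s in Set.Ioo 0 u, ((u - s) ^ (-α) : ℝ) • G s with hΨdef
  set k : ℝ → ℝ → ℝ := fun u s => ((u - s) ^ (-α) - (t - s) ^ (-α)) / (u - t) with hkdef
  set D : ℂ := (-α : ℝ) • ∫ s in Set.Ioo 0 t, ((t - s) ^ (-1-α) : ℝ) • G s with hDdef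
  -- global Hölder-type bound with positive distances
  have hG' : ∀ s, 0 ≤ s → s ≤ t + 1 → ‖G s‖ ≤ K * |t - s| ^ β := fun s h1 h2 => hK s ⟨h1, h2⟩
  -- integrability of the kernel against G
  have hInt : ∀ a b c : ℝ, 0 ≤ a → b ≤ c → b ≤ t + 1 →
      IntegrableOn (fun s : ℝ => ((c - s) ^ (-α) : ℝ) • G s) (Set.Ioo a b) volume := by
    intro a b c h1 h2 h3
    apply aux_integrable2 (J := K * (t + 1) ^ β) hα0 hα1 h1 h2 hGc
    intro s hs
    refine (hG' s (le_trans h1 hs.1.le) (hs.2.le.trans h3)).trans ?_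
    apply mul_le_mul_of_nonneg_left _ hK0
    apply Real.rpow_le_rpow (abs_nonneg _) _ hβ0.le
    have h4 := hs.1
    have h5 := hs.2
    rw [abs_le]; constructor <;> nlinarith [le_trans h1 hs.1.le]
  -- pointwise limit of difference quotients
  have hk_lim : ∀ s, 0 < s → s < t →
      Tendsto (fun u => k u s) (𝓝[≠] t) (𝓝 (-α * (t - s) ^ (-1-α))) := by
    intro s hs0 hst
    have hts : (0:ℝ) < t - s := by linarith
    have hd : HasDerivAt (fun x : ℝ => (x - s) ^ (-α)) (-α * (t - s) ^ (-1-α)) t := by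
      have h1 := Real.hasDerivAt_rpow_const (x := t - s) (p := -α) (Or.inl hts.ne')
      have h2 := h1.comp t ((hasDerivAt_id t).sub_const s)
      simpa [Function.comp_def, show -α - 1 = -1 - α by ring] using h2
    have h3 := hasDerivAt_iff_tendsto_slope.1 hd
    apply h3.congr
    intro u
    rw [slope_def_field]
  -- bound for right difference quotients
  have hk_bdR : ∀ u s : ℝ, 0 < s → s < t → t < u →
      |k u s| ≤ α * (t - s) ^ (-1-α) := by
    intro u s hs0 hst htu
    have h1 := key_ineq (x := t - s) (y := u - s) hα0 (by linarith) (by linarith)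
    rw [hkdef]
    rw [abs_div, abs_of_pos (by linarith : (0:ℝ) < u - t)]
    rw [div_le_iff₀ (by linarith : (0:ℝ) < u - t)]
    calc |(u - s) ^ (-α) - (t - s) ^ (-α)| ≤ α * (t - s) ^ (-1-α) * ((u - s) - (t - s)) := h1
      _ = α * (t - s) ^ (-1-α) * (u - t) := by ring
  -- bound for left difference quotients
  have hk_bdL : ∀ u s : ℝ, 0 < s → s ≤ 2*u - t → u < t →
      |k u s| ≤ α * 2 ^ (1+α) * (t - s) ^ (-1-α) := by
    intro u s hs0 hsc hut
    have hsu : s < u := by linarith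
    have h1 := key_ineq (x := u - s) (y := t - s) hα0 (by linarith) (by linarith)
    have h2 : |k u s| ≤ α * (u - s) ^ (-1-α) := by
      rw [hkdef]
      simp only []
      rw [abs_div, abs_sub_comm, show u - t = -(t - u) by ring, abs_neg,
        abs_of_pos (by linarith : (0:ℝ) < t - u)]
      rw [div_le_iff₀ (by linarith : (0:ℝ) < t - u)]
      calc |(t - s) ^ (-α) - (u - s) ^ (-α)| ≤ α * (u - s) ^ (-1-α) * ((t - s) - (u - s)) := h1
        _ = α * (u - s) ^ (-1-α) * (t - u) := by ring
    refine h2.trans ?_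
    have h3 : ((t - s)/2) ^ (-1-α) = (t - s) ^ (-1-α) * 2 ^ (1+α) := by
      rw [Real.div_rpow (by linarith : (0:ℝ) ≤ t - s) (by norm_num : (0:ℝ) ≤ 2)]
      rw [div_eq_mul_inv, ← Real.rpow_neg (by norm_num : (0:ℝ) ≤ 2)]
      rw [show -(-1-α) = 1+α by ring]
    have h4 : (u - s) ^ (-1-α) ≤ ((t - s)/2) ^ (-1-α) := by
      apply Real.rpow_le_rpow_of_nonpos (by linarith) (by linarith) (by linarith)
    calc α * (u - s) ^ (-1-α) ≤ α * ((t - s)/2) ^ (-1-α) :=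
          mul_le_mul_of_nonneg_left h4 hα0.le
      _ = α * 2 ^ (1+α) * (t - s) ^ (-1-α) := by rw [h3]; ring
  -- dominating function
  set bnd : ℝ → ℝ := fun s => (α * 2 ^ (1+α) * K) * (t - s) ^ (β - 1 - α) with hbnddef
  have hbnd_int : Integrable bnd (volume.restrict (Set.Ioo 0 t)) :=
    (aux_int (by linarith) ht.le).const_mul _
  have hGts : ∀ s ∈ Set.Ioo (0:ℝ) t, ‖G s‖ ≤ K * (t - s) ^ β := by
    intro s hs
    have := hG' s hs.1.le (by linarith [hs.2])
    rwa [abs_of_pos (by linarith [hs.2] : (0:ℝ) < t - s)] at this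
  have h2pow : (1:ℝ) ≤ 2 ^ (1+α) := by
    rw [show (1:ℝ) = 2 ^ (0:ℝ) by simp]
    exact Real.rpow_le_rpow_of_exponent_le one_le_two (by linarith)
  have hdom : ∀ u s : ℝ, s ∈ Set.Ioo 0 t →
      |k u s| ≤ α * 2 ^ (1+α) * (t - s) ^ (-1-α) → ‖k u s • G s‖ ≤ bnd s := by
    intro u s hs hk
    have hts : (0:ℝ) < t - s := by linarith [hs.2]
    rw [norm_smul, Real.norm_eq_abs]
    calc |k u s| * ‖G s‖ ≤ (α * 2 ^ (1+α) * (t - s) ^ (-1-α)) * (K * (t - s) ^ β) := by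
          apply mul_le_mul hk (hGts s hs) (norm_nonneg _)
          have := Real.rpow_nonneg hts.le (-1-α)
          exact mul_nonneg (mul_nonneg hα0.le (by positivity)) this
      _ = bnd s := by
          rw [hbnddef]
          have he : (t - s) ^ (-1-α) * (t - s) ^ β = (t - s) ^ (β - 1 - α) := by
            rw [← Real.rpow_add hts]; ring_nf
          calc (α * 2 ^ (1+α) * (t - s) ^ (-1-α)) * (K * (t - s) ^ β)
              = (α * 2 ^ (1+α) * K) * ((t - s) ^ (-1-α) * (t - s) ^ β) := by ring
            _ = (α * 2 ^ (1+α) * K) * (t - s) ^ (β - 1 - α) := by rw [he]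
  have hDint : D = ∫ s in Set.Ioo 0 t, ((-α : ℝ) • (((t - s) ^ (-1-α) : ℝ) • G s)) := by
    rw [hDdef, MeasureTheory.integral_smul]
  -- right-hand main term via dominated convergence
  have hAright : Tendsto (fun u => ∫ s in Set.Ioo 0 t, (k u s) • G s) (𝓝[>] t) (𝓝 D) := by
    rw [hDint]
    apply MeasureTheory.tendsto_integral_filter_of_dominated_convergence bnd
    · filter_upwards [self_mem_nhdsWithin] with u (hu : u ∈ Set.Ioi t)
      apply ContinuousOn.aestronglyMeasurable _ measurableSet_Ioo
      apply ContinuousOn.fun_smul _ (hGc.mono fun s hs => hs.1.le)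
      apply ContinuousOn.div_const
      apply ContinuousOn.sub
      · apply ContinuousOn.rpow_const (continuousOn_const.sub continuousOn_id)
        intro s hs
        have hsu : s < u := lt_trans hs.2 hu
        exact Or.inl (by intro hh; rw [Pi.sub_apply, sub_eq_zero] at hh; exact absurd hh.symm hsu.ne)
      · apply ContinuousOn.rpow_const (continuousOn_const.sub continuousOn_id)
        intro s hs
        exact Or.inl (by intro hh; rw [Pi.sub_apply, sub_eq_zero] at hh; exact absurd hh.symm hs.2.ne)
    · filter_upwards [self_mem_nhdsWithin] with u (hu : u ∈ Set.Ioi t)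
      rw [ae_restrict_iff' measurableSet_Ioo]
      filter_upwards with s hs
      apply hdom u s hs
      refine (hk_bdR u s hs.1 hs.2 hu).trans ?_
      have hts : (0:ℝ) < t - s := by linarith [hs.2]
      have := Real.rpow_nonneg hts.le (-1-α)
      calc α * (t - s) ^ (-1-α) = (α * (t - s) ^ (-1-α)) * 1 := by ring
        _ ≤ (α * (t - s) ^ (-1-α)) * 2 ^ (1+α) :=
            mul_le_mul_of_nonneg_left h2pow (mul_nonneg hα0.le this)
        _ = α * 2 ^ (1+α) * (t - s) ^ (-1-α) := by ring
    · exact hbnd_int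
    · rw [ae_restrict_iff' measurableSet_Ioo]
      filter_upwards with s hs
      have h1 := (hk_lim s hs.1 hs.2).mono_left
        (nhdsWithin_mono t fun x (hx : x ∈ Set.Ioi t) => ne_of_gt hx)
      have h2 := h1.smul_const (G s)
      simpa [smul_smul, mul_assoc] using h2
  -- right-hand remainder term
  have hremR : Tendsto (fun u => (u - t)⁻¹ • ∫ s in Set.Ioo t u, ((u - s) ^ (-α) : ℝ) • G s)
      (𝓝[>] t) (𝓝 0) := by
    apply aux_tend0 (show (0:ℝ) < β - α by linarith) (C := K / (1 - α)) nhdsWithin_le_nhds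
    filter_upwards [Ioo_mem_nhdsGT (show t < t+1 by linarith)] with u hu
    obtain ⟨hu1, hu2⟩ := hu
    have hut : (0:ℝ) < u - t := by linarith
    have hJb : ∀ s ∈ Set.Ioo t u, ‖G s‖ ≤ K * (u - t) ^ β := by
      intro s hs
      refine (hG' s (by linarith [hs.1] : (0:ℝ) ≤ s) (by linarith [hs.2])).trans ?_
      apply mul_le_mul_of_nonneg_left _ hK0
      apply Real.rpow_le_rpow (abs_nonneg _) _ hβ0.le
      rw [abs_sub_comm, abs_of_pos (by linarith [hs.1] : (0:ℝ) < s - t)]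
      linarith [hs.2]
    have hb := aux_normbound (α := α) (a := t) (b := u) (c := u) (J := K * (u - t) ^ β)
      hα0 hα1 ht.le hu1.le le_rfl (by positivity) hGc hJb
    have e1 : (u - t) ^ β * (u - t) ^ (1 - α) = (u - t) ^ (β - α) * (u - t) := by
      rw [← Real.rpow_add hut, show β + (1 - α) = (β - α) + 1 by ring,
        Real.rpow_add_one hut.ne']
    rw [norm_smul, norm_inv, Real.norm_eq_abs, abs_of_pos hut]
    calc (u - t)⁻¹ * ‖∫ s in Set.Ioo t u, ((u - s) ^ (-α) : ℝ) • G s‖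
        ≤ (u - t)⁻¹ * (K * (u - t) ^ β * (u - t) ^ (1 - α) / (1 - α)) :=
          mul_le_mul_of_nonneg_left hb (inv_nonneg.2 hut.le)
      _ = K / (1 - α) * (u - t) ^ (β - α) := by
          rw [show K * (u - t) ^ β * (u - t) ^ (1 - α) = K * ((u - t) ^ β * (u - t) ^ (1 - α)) by ring,
            e1]
          rw [show (u - t)⁻¹ * (K * ((u - t) ^ (β - α) * (u - t)) / (1 - α))
              = (K * (u - t) ^ (β - α)) * ((u - t)⁻¹ * (u - t)) / (1 - α) by ring,
            inv_mul_cancel₀ hut.ne']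
          ring
  -- decomposition of the slope on the right
  have hsplitR : ∀ᶠ u in 𝓝[>] t, slope Ψ t u =
      (∫ s in Set.Ioo 0 t, (k u s) • G s) +
        (u - t)⁻¹ • ∫ s in Set.Ioo t u, ((u - s) ^ (-α) : ℝ) • G s := by
    filter_upwards [Ioo_mem_nhdsGT (show t < t+1 by linarith)] with u hu
    obtain ⟨hu1, hu2⟩ := hu
    have hIu : Set.Ioc 0 t ∪ Set.Ioo t u = Set.Ioo 0 u := Set.Ioc_union_Ioo_eq_Ioo ht.le hu1
    have hintu : IntegrableOn (fun s : ℝ => ((u - s) ^ (-α) : ℝ) • G s) (Set.Ioo 0 u) volume :=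
      hInt 0 u u le_rfl le_rfl (by linarith)
    have hint1 : IntegrableOn (fun s : ℝ => ((u - s) ^ (-α) : ℝ) • G s) (Set.Ioc 0 t) volume :=
      hintu.mono_set (fun s hs => ⟨hs.1, lt_of_le_of_lt hs.2 hu1⟩)
    have hint2 : IntegrableOn (fun s : ℝ => ((u - s) ^ (-α) : ℝ) • G s) (Set.Ioo t u) volume :=
      hintu.mono_set (fun s hs => ⟨lt_trans ht hs.1, hs.2⟩)
    have hint3 : IntegrableOn (fun s : ℝ => ((u - s) ^ (-α) : ℝ) • G s) (Set.Ioo 0 t) volume :=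
      hint1.mono_set Set.Ioo_subset_Ioc_self
    have hint4 : IntegrableOn (fun s : ℝ => ((t - s) ^ (-α) : ℝ) • G s) (Set.Ioo 0 t) volume :=
      hInt 0 t t le_rfl le_rfl (by linarith)
    have hPsiu : Ψ u = (∫ s in Set.Ioo 0 t, ((u - s) ^ (-α) : ℝ) • G s)
        + ∫ s in Set.Ioo t u, ((u - s) ^ (-α) : ℝ) • G s := by
      show (∫ s in Set.Ioo 0 u, ((u - s) ^ (-α) : ℝ) • G s) = _
      rw [← hIu, setIntegral_union
        ((Set.Ioc_disjoint_Ioc_of_le le_rfl).mono_right Set.Ioo_subset_Ioc_self)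
        measurableSet_Ioo hint1 hint2, MeasureTheory.integral_Ioc_eq_integral_Ioo]
    have hsub : (∫ s in Set.Ioo 0 t, ((u - s) ^ (-α) : ℝ) • G s) - Ψ t
        = ∫ s in Set.Ioo 0 t, (((u - s) ^ (-α) - (t - s) ^ (-α) : ℝ)) • G s := by
      show _ - (∫ s in Set.Ioo 0 t, ((t - s) ^ (-α) : ℝ) • G s) = _
      rw [← integral_sub hint3 hint4]
      congr 1
      funext s
      rw [sub_smul]
    rw [slope_def_module, hPsiu,
      show (∫ s in Set.Ioo 0 t, ((u - s) ^ (-α) : ℝ) • G s)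
          + (∫ s in Set.Ioo t u, ((u - s) ^ (-α) : ℝ) • G s) - Ψ t
        = ((∫ s in Set.Ioo 0 t, ((u - s) ^ (-α) : ℝ) • G s) - Ψ t)
          + (∫ s in Set.Ioo t u, ((u - s) ^ (-α) : ℝ) • G s) by ring,
      hsub, smul_add]
    congr 1
    rw [← MeasureTheory.integral_smul]
    congr 1
    funext s
    rw [smul_smul]
    congr 1
    show (u - t)⁻¹ * ((u - s) ^ (-α) - (t - s) ^ (-α))
        = ((u - s) ^ (-α) - (t - s) ^ (-α)) / (u - t)
    rw [div_eq_inv_mul]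
  have hright : Tendsto (slope Ψ t) (𝓝[>] t) (𝓝 D) := by
    have h1 := hAright.add hremR
    rw [add_zero] at h1
    exact h1.congr' (hsplitR.mono fun u hu => hu.symm)
  -- LEFT SIDE
  have hAleft : Tendsto (fun u => ∫ s in Set.Ioo 0 t,
      (Set.Ioc 0 (2*u - t)).indicator (fun s' => k u s' • G s') s) (𝓝[<] t) (𝓝 D) := by
    rw [hDint]
    apply MeasureTheory.tendsto_integral_filter_of_dominated_convergence bnd
    · filter_upwards [Ioo_mem_nhdsLT (show 3*t/4 < t by linarith)] with u hu
      obtain ⟨hu1, hu2⟩ := hu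
      rw [aestronglyMeasurable_indicator_iff measurableSet_Ioc,
        Measure.restrict_restrict measurableSet_Ioc]
      apply ContinuousOn.aestronglyMeasurable _ (measurableSet_Ioc.inter measurableSet_Ioo)
      apply ContinuousOn.fun_smul _ (hGc.mono fun s hs => hs.1.1.le)
      apply ContinuousOn.div_const
      apply ContinuousOn.sub
      · apply ContinuousOn.rpow_const (continuousOn_const.sub continuousOn_id)
        intro s hs
        have hsu : s < u := by have := hs.1.2; linarith
        exact Or.inl (by intro hh; rw [Pi.sub_apply, sub_eq_zero] at hh; exact absurd hh.symm hsu.ne)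
      · apply ContinuousOn.rpow_const (continuousOn_const.sub continuousOn_id)
        intro s hs
        have hst : s < t := hs.2.2
        exact Or.inl (by intro hh; rw [Pi.sub_apply, sub_eq_zero] at hh; exact absurd hh.symm hst.ne)
    · filter_upwards [Ioo_mem_nhdsLT (show 3*t/4 < t by linarith)] with u hu
      obtain ⟨hu1, hu2⟩ := hu
      rw [ae_restrict_iff' measurableSet_Ioo]
      filter_upwards with s hs
      by_cases hmem : s ∈ Set.Ioc 0 (2*u - t)
      · rw [Set.indicator_of_mem hmem]
        exact hdom u s hs (hk_bdL u s hs.1 hmem.2 hu2)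
      · rw [Set.indicator_of_notMem hmem]
        simp only [norm_zero]
        have hts : (0:ℝ) < t - s := by linarith [hs.2]
        exact mul_nonneg (mul_nonneg (mul_nonneg hα0.le
          (Real.rpow_nonneg (by norm_num) _)) hK0) (Real.rpow_nonneg hts.le _)
    · exact hbnd_int
    · rw [ae_restrict_iff' measurableSet_Ioo]
      filter_upwards with s hs
      have h1 := (hk_lim s hs.1 hs.2).mono_left
        (nhdsWithin_mono t fun x (hx : x ∈ Set.Iio t) => ne_of_lt hx)
      have h2 : Tendsto (fun u => k u s • G s) (𝓝[<] t)
          (𝓝 ((-α : ℝ) • (((t - s) ^ (-1-α) : ℝ) • G s))) := by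
        simpa [smul_smul, mul_assoc] using h1.smul_const (G s)
      apply h2.congr'
      filter_upwards [Ioo_mem_nhdsLT (show (s+t)/2 < t by linarith [hs.2])] with u hu
      have hmem : s ∈ Set.Ioc 0 (2*u - t) := ⟨hs.1, by linarith [hu.1]⟩
      exact (Set.indicator_of_mem hmem (fun s' : ℝ => k u s' • G s')).symm
  have hremL1 : Tendsto (fun u => (u - t)⁻¹ •
      ∫ s in Set.Ioo (2*u - t) u, ((u - s) ^ (-α) : ℝ) • G s) (𝓝[<] t) (𝓝 0) := by
    apply aux_tend0 (show (0:ℝ) < β - α by linarith) (C := K * 2^β / (1 - α)) nhdsWithin_le_nhds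
    filter_upwards [Ioo_mem_nhdsLT (show 3*t/4 < t by linarith)] with u hu
    obtain ⟨hu1, hu2⟩ := hu
    have htu : (0:ℝ) < t - u := by linarith
    have hc0 : (0:ℝ) < 2*u - t := by linarith
    have hJb : ∀ s ∈ Set.Ioo (2*u - t) u, ‖G s‖ ≤ K * (2*(t - u)) ^ β := by
      intro s hs
      refine (hG' s (by linarith [hs.1]) (by linarith [hs.2])).trans ?_
      apply mul_le_mul_of_nonneg_left _ hK0
      apply Real.rpow_le_rpow (abs_nonneg _) _ hβ0.le
      rw [abs_of_pos (by linarith [hs.2] : (0:ℝ) < t - s)]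
      linarith [hs.1]
    have hb := aux_normbound (α := α) (a := 2*u - t) (b := u) (c := u) (J := K * (2*(t-u)) ^ β)
      hα0 hα1 hc0.le (by linarith) le_rfl (mul_nonneg hK0 (Real.rpow_nonneg (by linarith) _)) hGc hJb
    have e0 : u - (2*u - t) = t - u := by ring
    rw [e0] at hb
    have e2 : (2*(t-u)) ^ β = 2^β * (t-u)^β :=
      Real.mul_rpow (by norm_num) htu.le
    have e1 : (t - u) ^ β * (t - u) ^ (1 - α) = (t - u) ^ (β - α) * (t - u) := by
      rw [← Real.rpow_add htu, show β + (1 - α) = (β - α) + 1 by ring,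
        Real.rpow_add_one htu.ne']
    rw [norm_smul, norm_inv, Real.norm_eq_abs, abs_sub_comm, abs_of_pos htu]
    calc (t - u)⁻¹ * ‖∫ s in Set.Ioo (2*u - t) u, ((u - s) ^ (-α) : ℝ) • G s‖
        ≤ (t - u)⁻¹ * (K * (2*(t-u)) ^ β * (t - u) ^ (1 - α) / (1 - α)) :=
          mul_le_mul_of_nonneg_left hb (inv_nonneg.2 htu.le)
      _ = K * 2^β / (1 - α) * (t - u) ^ (β - α) := by
          rw [e2,
            show K * (2^β * (t-u)^β) * (t - u) ^ (1 - α)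
              = (K * 2^β) * ((t-u)^β * (t - u) ^ (1 - α)) by ring, e1,
            show (t - u)⁻¹ * ((K * 2^β) * ((t - u) ^ (β - α) * (t - u)) / (1 - α))
              = (K * 2^β * (t - u) ^ (β - α)) * ((t - u)⁻¹ * (t - u)) / (1 - α) by ring,
            inv_mul_cancel₀ htu.ne']
          ring
  have hremL2 : Tendsto (fun u => (u - t)⁻¹ •
      ∫ s in Set.Ioo (2*u - t) t, ((t - s) ^ (-α) : ℝ) • G s) (𝓝[<] t) (𝓝 0) := by
    apply aux_tend0 (show (0:ℝ) < β - α by linarith)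
      (C := K * 2^β * 2^(1-α) / (1 - α)) nhdsWithin_le_nhds
    filter_upwards [Ioo_mem_nhdsLT (show 3*t/4 < t by linarith)] with u hu
    obtain ⟨hu1, hu2⟩ := hu
    have htu : (0:ℝ) < t - u := by linarith
    have hc0 : (0:ℝ) < 2*u - t := by linarith
    have hJb : ∀ s ∈ Set.Ioo (2*u - t) t, ‖G s‖ ≤ K * (2*(t - u)) ^ β := by
      intro s hs
      refine (hG' s (by linarith [hs.1]) (by linarith [hs.2])).trans ?_
      apply mul_le_mul_of_nonneg_left _ hK0
      apply Real.rpow_le_rpow (abs_nonneg _) _ hβ0.le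
      rw [abs_of_pos (by linarith [hs.2] : (0:ℝ) < t - s)]
      linarith [hs.1]
    have hb := aux_normbound (α := α) (a := 2*u - t) (b := t) (c := t) (J := K * (2*(t-u)) ^ β)
      hα0 hα1 hc0.le (by linarith) le_rfl (mul_nonneg hK0 (Real.rpow_nonneg (by linarith) _)) hGc hJb
    have e0 : t - (2*u - t) = 2*(t - u) := by ring
    rw [e0] at hb
    have e2 : ∀ γ' : ℝ, (2*(t-u)) ^ γ' = 2^γ' * (t-u)^γ' :=
      fun γ' => Real.mul_rpow (by norm_num) htu.le
    have e1 : (t - u) ^ β * (t - u) ^ (1 - α) = (t - u) ^ (β - α) * (t - u) := by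
      rw [← Real.rpow_add htu, show β + (1 - α) = (β - α) + 1 by ring,
        Real.rpow_add_one htu.ne']
    rw [norm_smul, norm_inv, Real.norm_eq_abs, abs_sub_comm, abs_of_pos htu]
    calc (t - u)⁻¹ * ‖∫ s in Set.Ioo (2*u - t) t, ((t - s) ^ (-α) : ℝ) • G s‖
        ≤ (t - u)⁻¹ * (K * (2*(t-u)) ^ β * (2*(t-u)) ^ (1 - α) / (1 - α)) :=
          mul_le_mul_of_nonneg_left hb (inv_nonneg.2 htu.le)
      _ = K * 2^β * 2^(1-α) / (1 - α) * (t - u) ^ (β - α) := by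
          rw [e2 β, e2 (1-α),
            show K * (2^β * (t-u)^β) * (2^(1-α) * (t - u) ^ (1 - α))
              = (K * 2^β * 2^(1-α)) * ((t-u)^β * (t - u) ^ (1 - α)) by ring, e1,
            show (t - u)⁻¹ * ((K * 2^β * 2^(1-α)) * ((t - u) ^ (β - α) * (t - u)) / (1 - α))
              = (K * 2^β * 2^(1-α) * (t - u) ^ (β - α)) * ((t - u)⁻¹ * (t - u)) / (1 - α) by ring,
            inv_mul_cancel₀ htu.ne']
          ring
  have hsplitL : ∀ᶠ u in 𝓝[<] t, slope Ψ t u =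
      (∫ s in Set.Ioo 0 t, (Set.Ioc 0 (2*u - t)).indicator (fun s' => k u s' • G s') s)
      + ((u - t)⁻¹ • (∫ s in Set.Ioo (2*u - t) u, ((u - s) ^ (-α) : ℝ) • G s)
        - (u - t)⁻¹ • (∫ s in Set.Ioo (2*u - t) t, ((t - s) ^ (-α) : ℝ) • G s)) := by
    filter_upwards [Ioo_mem_nhdsLT (show 3*t/4 < t by linarith)] with u hu
    obtain ⟨hu1, hu2⟩ := hu
    have hc0 : (0:ℝ) < 2*u - t := by linarith
    have hcu : 2*u - t < u := by linarith
    have hct : 2*u - t < t := by linarith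
    have hsplit_u : Set.Ioc 0 (2*u-t) ∪ Set.Ioo (2*u-t) u = Set.Ioo 0 u :=
      Set.Ioc_union_Ioo_eq_Ioo hc0.le hcu
    have hsplit_t : Set.Ioc 0 (2*u-t) ∪ Set.Ioo (2*u-t) t = Set.Ioo 0 t :=
      Set.Ioc_union_Ioo_eq_Ioo hc0.le hct
    have hintu : IntegrableOn (fun s : ℝ => ((u - s) ^ (-α) : ℝ) • G s) (Set.Ioo 0 u) volume :=
      hInt 0 u u le_rfl le_rfl (by linarith)
    have hintt : IntegrableOn (fun s : ℝ => ((t - s) ^ (-α) : ℝ) • G s) (Set.Ioo 0 t) volume :=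
      hInt 0 t t le_rfl le_rfl (by linarith)
    have hdisj : Disjoint (Set.Ioc (0:ℝ) (2*u-t)) (Set.Ioo (2*u-t) u) :=
      (Set.Ioc_disjoint_Ioc_of_le le_rfl).mono_right Set.Ioo_subset_Ioc_self
    have hdisj' : Disjoint (Set.Ioc (0:ℝ) (2*u-t)) (Set.Ioo (2*u-t) t) :=
      (Set.Ioc_disjoint_Ioc_of_le le_rfl).mono_right Set.Ioo_subset_Ioc_self
    have hPsiu : Ψ u = (∫ s in Set.Ioc 0 (2*u-t), ((u - s) ^ (-α) : ℝ) • G s)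
        + ∫ s in Set.Ioo (2*u-t) u, ((u - s) ^ (-α) : ℝ) • G s := by
      show (∫ s in Set.Ioo 0 u, ((u - s) ^ (-α) : ℝ) • G s) = _
      rw [← hsplit_u, setIntegral_union hdisj measurableSet_Ioo
        (hintu.mono_set (hsplit_u ▸ Set.subset_union_left))
        (hintu.mono_set (hsplit_u ▸ Set.subset_union_right))]
    have hPsit : Ψ t = (∫ s in Set.Ioc 0 (2*u-t), ((t - s) ^ (-α) : ℝ) • G s)
        + ∫ s in Set.Ioo (2*u-t) t, ((t - s) ^ (-α) : ℝ) • G s := by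
      show (∫ s in Set.Ioo 0 t, ((t - s) ^ (-α) : ℝ) • G s) = _
      rw [← hsplit_t, setIntegral_union hdisj' measurableSet_Ioo
        (hintt.mono_set (hsplit_t ▸ Set.subset_union_left))
        (hintt.mono_set (hsplit_t ▸ Set.subset_union_right))]
    have hind : (∫ s in Set.Ioo 0 t, (Set.Ioc 0 (2*u-t)).indicator (fun s' => k u s' • G s') s)
        = ∫ s in Set.Ioc 0 (2*u-t), k u s • G s := by
      have hss : Set.Ioc (0:ℝ) (2*u-t) ⊆ Set.Ioo 0 t :=
        fun s hs => ⟨hs.1, lt_of_le_of_lt hs.2 hct⟩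
      rw [MeasureTheory.integral_indicator measurableSet_Ioc,
        Measure.restrict_restrict measurableSet_Ioc, Set.inter_eq_left.2 hss]
    have hsub2 : (∫ s in Set.Ioc 0 (2*u-t), ((u - s) ^ (-α) : ℝ) • G s)
        - (∫ s in Set.Ioc 0 (2*u-t), ((t - s) ^ (-α) : ℝ) • G s)
        = ∫ s in Set.Ioc 0 (2*u-t), (((u - s)^(-α) - (t - s)^(-α) : ℝ)) • G s := by
      rw [← integral_sub
        (hintu.mono_set (fun s hs => ⟨hs.1, lt_of_le_of_lt hs.2 hcu⟩))
        (hintt.mono_set (fun s hs => ⟨hs.1, lt_of_le_of_lt hs.2 hct⟩))]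
      congr 1
      funext s
      rw [sub_smul]
    have key : (u - t)⁻¹ • (Ψ u - Ψ t)
        = (u - t)⁻¹ • ((∫ s in Set.Ioc 0 (2*u-t), ((u - s) ^ (-α) : ℝ) • G s)
            - (∫ s in Set.Ioc 0 (2*u-t), ((t - s) ^ (-α) : ℝ) • G s))
          + ((u - t)⁻¹ • (∫ s in Set.Ioo (2*u-t) u, ((u - s) ^ (-α) : ℝ) • G s)
            - (u - t)⁻¹ • (∫ s in Set.Ioo (2*u-t) t, ((t - s) ^ (-α) : ℝ) • G s)) := by
      rw [hPsiu, hPsit]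
      simp only [smul_sub, smul_add]
      abel
    rw [slope_def_module, key, hind]
    congr 1
    rw [hsub2, ← MeasureTheory.integral_smul]
    congr 1
    funext s
    rw [smul_smul]
    congr 1
    show (u - t)⁻¹ * ((u - s) ^ (-α) - (t - s) ^ (-α))
        = ((u - s) ^ (-α) - (t - s) ^ (-α)) / (u - t)
    rw [div_eq_inv_mul]
  have hleft : Tendsto (slope Ψ t) (𝓝[<] t) (𝓝 D) := by
    have h1 := hAleft.add (hremL1.sub hremL2)
    rw [sub_zero, add_zero] at h1
    exact h1.congr' (hsplitL.mono fun u hu => hu.symm)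
  rw [hasDerivAt_iff_tendsto_slope, ← nhdsLT_sup_nhdsGT t, tendsto_sup]
  exact ⟨hleft, hright⟩


theorem stmt9 (β : ℝ) (hβ : β ∈ Set.Ioc (0 : ℝ) 1) (F : ℝ → ℂ)
    (hFc : ContinuousOn F (Set.Ici 0))
    (hFh : ∀ a b : ℝ, 0 < a → a < b → ∃ M : ℝ,
      ∀ x ∈ Set.Icc a b, ∀ y ∈ Set.Icc a b, ‖F x - F y‖ ≤ M * |x - y| ^ β)
    (α : ℝ) (hα : α ∈ Set.Ioo 0 β) (t : ℝ) (ht : 0 < t) :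
    IntegrableOn (fun s : ℝ => ((t - s) ^ (-1 - α) : ℝ) • (F t - F s))
        (Set.Ioo 0 t) volume ∧
      HasDerivAt
        (fun u : ℝ => (Real.Gamma (1 - α))⁻¹ •
          ∫ s in Set.Ioo (0 : ℝ) u, ((u - s) ^ ((1 - α) - 1) : ℝ) • F s)
        ((Real.Gamma (1 - α))⁻¹ •
          ((t ^ (-α) : ℝ) • F t +
            α • ∫ s in Set.Ioo (0 : ℝ) t, ((t - s) ^ (-1 - α) : ℝ) • (F t - F s)))
        t := by
  obtain ⟨hβ0, hβ1⟩ := hβ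
  obtain ⟨hα0, hαβ⟩ := hα
  have hα1 : α < 1 := lt_of_lt_of_le hαβ hβ1
  set G : ℝ → ℂ := fun s => F s - F t with hGdef
  have hGc : ContinuousOn G (Set.Ici 0) := hFc.sub continuousOn_const
  obtain ⟨M, hM⟩ := hFh (t/2) (t+1) (by linarith) (by linarith)
  obtain ⟨C, hC⟩ := (isCompact_Icc (a := (0:ℝ)) (b := t+1)).exists_bound_of_continuousOn
    (hFc.mono (fun s hs => hs.1))
  have hC0 : 0 ≤ C := le_trans (norm_nonneg (F 0)) (hC 0 ⟨le_rfl, by linarith⟩)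
  set K : ℝ := max |M| ((2*C) * (t/2) ^ (-β)) with hKdef
  have hK0 : 0 ≤ K := le_trans (abs_nonneg M) (le_max_left _ _)
  have hK : ∀ s ∈ Set.Icc (0:ℝ) (t+1), ‖G s‖ ≤ K * |t - s| ^ β := by
    intro s hs
    rcases le_or_gt (t/2) s with h | h
    · have h1 := hM s ⟨h, hs.2⟩ t ⟨by linarith, by linarith⟩
      refine h1.trans ?_
      rw [abs_sub_comm s t]
      apply mul_le_mul_of_nonneg_right _ (Real.rpow_nonneg (abs_nonneg _) β)
      exact le_trans (le_abs_self M) (le_max_left _ _)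
    · have h2C : ‖G s‖ ≤ 2*C := by
        calc ‖F s - F t‖ ≤ ‖F s‖ + ‖F t‖ := norm_sub_le _ _
          _ ≤ C + C := add_le_add (hC s ⟨hs.1, hs.2⟩) (hC t ⟨ht.le, by linarith⟩)
          _ = 2*C := by ring
      have habs : t/2 ≤ |t - s| := by rw [abs_of_pos (by linarith : (0:ℝ) < t - s)]; linarith
      have h3 : (t/2) ^ β ≤ |t - s| ^ β := Real.rpow_le_rpow (by linarith) habs hβ0.le
      have h4 : (2*C : ℝ) = (2*C*(t/2) ^ (-β)) * (t/2) ^ β := by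
        rw [mul_assoc, ← Real.rpow_add (by linarith : (0:ℝ) < t/2)]
        simp
      calc ‖G s‖ ≤ 2*C := h2C
        _ = (2*C*(t/2) ^ (-β)) * (t/2) ^ β := h4
        _ ≤ K * (t/2) ^ β := mul_le_mul_of_nonneg_right (le_max_right _ _)
            (Real.rpow_nonneg (by linarith) _)
        _ ≤ K * |t - s| ^ β := mul_le_mul_of_nonneg_left h3 hK0
  have hL := aux_L hα0 hαβ hβ1 ht hGc hK0 hK
  have hflip : (fun s : ℝ => ((t - s) ^ (-1 - α) : ℝ) • (F t - F s))
      = fun s : ℝ => -(((t - s) ^ (-1-α) : ℝ) • G s) := by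
    funext s
    rw [hGdef, ← smul_neg, neg_sub]
  constructor
  · rw [hflip]
    exact hL.neg
  · rw [show (1 - α) - 1 = -α by ring]
    have hΨ := psi_deriv hα0 hαβ hβ1 ht hGc hK0 hK
    have hpow : HasDerivAt (fun u : ℝ => u ^ (1-α) / (1-α)) (t ^ (-α)) t := by
      have h := (Real.hasDerivAt_rpow_const (x := t) (p := 1-α) (Or.inl ht.ne')).div_const (1-α)
      rw [show (1-α) - 1 = -α by ring] at h
      have he : (1-α) * t ^ (-α) / (1-α) = t ^ (-α) := by
        exact mul_div_cancel_left₀ _ (by linarith : (1:ℝ)-α ≠ 0)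
      rwa [he] at h
    have hsmul := hpow.smul_const (F t)
    have hsum := hΨ.add hsmul
    have hval : ((-α : ℝ) • ∫ s in Set.Ioo 0 t, ((t - s) ^ (-1-α) : ℝ) • G s)
        + (t ^ (-α) : ℝ) • F t
        = (t ^ (-α) : ℝ) • F t
          + α • ∫ s in Set.Ioo (0:ℝ) t, ((t - s) ^ (-1 - α) : ℝ) • (F t - F s) := by
      rw [hflip, MeasureTheory.integral_neg, smul_neg, neg_smul]
      abel
    have hev : (fun u : ℝ => ∫ s in Set.Ioo 0 u, ((u - s) ^ (-α) : ℝ) • F s)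
        =ᶠ[𝓝 t] fun u => (∫ s in Set.Ioo 0 u, ((u - s) ^ (-α) : ℝ) • G s)
          + (u ^ (1-α) / (1-α)) • F t := by
      filter_upwards [Ioo_mem_nhds ht (by linarith : t < t+1)] with u hu
      obtain ⟨hu0, hu1⟩ := hu
      have hJ : ∀ s ∈ Set.Ioo (0:ℝ) u, ‖G s‖ ≤ K * (t+1) ^ β := by
        intro s hs
        refine (hK s ⟨hs.1.le, by linarith [hs.2]⟩).trans ?_
        apply mul_le_mul_of_nonneg_left _ hK0
        apply Real.rpow_le_rpow (abs_nonneg _) _ hβ0.le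
        rw [abs_le]
        constructor
        · linarith [hs.2]
        · linarith [hs.1]
      have hint1 : IntegrableOn (fun s : ℝ => ((u - s) ^ (-α) : ℝ) • G s) (Set.Ioo 0 u) volume :=
        aux_integrable2 hα0 hα1 le_rfl le_rfl hGc hJ
      have hint2 : IntegrableOn (fun s : ℝ => ((u - s) ^ (-α) : ℝ) • F t) (Set.Ioo 0 u) volume :=
        (aux_int (by linarith : (-1:ℝ) < -α) hu0.le).smul_const (F t)
      have h1 : (fun s : ℝ => ((u - s) ^ (-α) : ℝ) • F s)
          = fun s => ((u - s) ^ (-α) : ℝ) • G s + ((u - s) ^ (-α) : ℝ) • F t := by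
        funext s
        rw [hGdef, ← smul_add]
        congr 1
        simp
      rw [h1, MeasureTheory.integral_add hint1 hint2, _root_.integral_smul_const]
      congr 2
      rw [aux_val (by linarith : (-1:ℝ) < -α) hu0.le le_rfl]
      rw [sub_self, Real.zero_rpow (by linarith : -α+1 ≠ 0), sub_zero, sub_zero,
        show -α+1 = 1-α by ring]
    have hfinal := hsum.congr_of_eventuallyEq hev
    rw [hval] at hfinal
    exact hfinal.const_smul ((Real.Gamma (1 - α))⁻¹)
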